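/- The set R = { x ∈ ℤ⁶ : χ(x) = 0 } of radical vectors is an additive subgroup of ℤ⁶; it contains h₀ = (2,1,1,1,1,0) and h_∞ = (0,1,1,1,1,2); and the subgroup of R generated by h₀ and h_∞ has finite index in R (i.e. the quotient group R / (ℤh₀ + ℤh_∞) is finite). -/

import Mathlib

/-- The Euler bilinear form of the canonical tubular algebra `C(2,2,2,2)` on `ℤ⁶`,
with coordinates `(x₀, x₁, x₂, x₃, x₄, x_∞)` indexed by `0,1,2,3,4,5`. -/
def eulerForm (x y : Fin 6 → ℤ) : ℤ :=
  (x 0 * y 0 + x 1 * y 1 + x 2 * y 2 + x 3 * y 3 + x 4 * y 4 + x 5 * y 5)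
    - y 0 * (x 1 + x 2 + x 3 + x 4) - x 5 * (y 1 + y 2 + y 3 + y 4) + 2 * x 5 * y 0

/-- The associated quadratic form `χ(x) = ⟨x,x⟩`. -/
def chi (x : Fin 6 → ℤ) : ℤ := eulerForm x x

/-- The canonical radical vector `h₀ = (2,1,1,1,1,0)`. -/
def h0 : Fin 6 → ℤ := ![2, 1, 1, 1, 1, 0]

/-- The canonical radical vector `h_∞ = (0,1,1,1,1,2)`. -/
def hinf : Fin 6 → ℤ := ![0, 1, 1, 1, 1, 2]

/-- Linear characterization of the radical: `χ(x) = 0` iff `2xᵢ = x₀ + x₅` for `i = 1,2,3,4`. -/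
lemma chi_eq_zero_iff (x : Fin 6 → ℤ) :
    chi x = 0 ↔ 2 * x 1 = x 0 + x 5 ∧ 2 * x 2 = x 0 + x 5 ∧
      2 * x 3 = x 0 + x 5 ∧ 2 * x 4 = x 0 + x 5 := by
  have key : 4 * chi x = (2 * x 1 - x 0 - x 5) ^ 2 + (2 * x 2 - x 0 - x 5) ^ 2
      + (2 * x 3 - x 0 - x 5) ^ 2 + (2 * x 4 - x 0 - x 5) ^ 2 := by
    simp only [chi, eulerForm]; ring
  constructor
  · intro h
    rw [h, mul_zero] at key
    have h1 : (2 * x 1 - x 0 - x 5) ^ 2 = 0 := by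
      nlinarith [sq_nonneg (2 * x 2 - x 0 - x 5), sq_nonneg (2 * x 3 - x 0 - x 5),
        sq_nonneg (2 * x 4 - x 0 - x 5), sq_nonneg (2 * x 1 - x 0 - x 5)]
    have h2 : (2 * x 2 - x 0 - x 5) ^ 2 = 0 := by
      nlinarith [sq_nonneg (2 * x 2 - x 0 - x 5), sq_nonneg (2 * x 3 - x 0 - x 5),
        sq_nonneg (2 * x 4 - x 0 - x 5), sq_nonneg (2 * x 1 - x 0 - x 5)]
    have h3 : (2 * x 3 - x 0 - x 5) ^ 2 = 0 := by
      nlinarith [sq_nonneg (2 * x 2 - x 0 - x 5), sq_nonneg (2 * x 3 - x 0 - x 5),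
        sq_nonneg (2 * x 4 - x 0 - x 5), sq_nonneg (2 * x 1 - x 0 - x 5)]
    have h4 : (2 * x 4 - x 0 - x 5) ^ 2 = 0 := by
      nlinarith [sq_nonneg (2 * x 2 - x 0 - x 5), sq_nonneg (2 * x 3 - x 0 - x 5),
        sq_nonneg (2 * x 4 - x 0 - x 5), sq_nonneg (2 * x 1 - x 0 - x 5)]
    rw [pow_eq_zero_iff (two_ne_zero)] at h1 h2 h3 h4
    exact ⟨by linarith, by linarith, by linarith, by linarith⟩
  · rintro ⟨h1, h2, h3, h4⟩
    have : 4 * chi x = 0 := by rw [key]; nlinarith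
    linarith

/-- The radical subgroup. -/
def Rad : AddSubgroup (Fin 6 → ℤ) where
  carrier := { x | chi x = 0 }
  add_mem' := by
    intro a b ha hb
    simp only [Set.mem_setOf_eq, chi_eq_zero_iff] at *
    simp only [Pi.add_apply]
    omega
  zero_mem' := by simp only [Set.mem_setOf_eq, chi_eq_zero_iff, Pi.zero_apply]; omega
  neg_mem' := by
    intro a ha
    simp only [Set.mem_setOf_eq, chi_eq_zero_iff] at *
    simp only [Pi.neg_apply]
    omega

theorem radical_vectors_subgroup_with_finite_index_sub :
    ∃ R : AddSubgroup (Fin 6 → ℤ),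
      (R : Set (Fin 6 → ℤ)) = { x | chi x = 0 } ∧
      h0 ∈ R ∧ hinf ∈ R ∧
      (AddSubgroup.closure {h0, hinf}).relIndex R ≠ 0 := by
  refine ⟨Rad, rfl, ?_, ?_, ?_⟩
  · show chi h0 = 0
    decide
  · show chi hinf = 0
    decide
  · -- finite index
    set H := AddSubgroup.closure ({h0, hinf} : Set (Fin 6 → ℤ)) with hH
    have hh0 : h0 ∈ H := AddSubgroup.subset_closure (by simp)
    have hhinf : hinf ∈ H := AddSubgroup.subset_closure (by simp)
    -- for x ∈ Rad, 2 • x ∈ H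
    have key : ∀ x : Fin 6 → ℤ, x ∈ Rad → (2 : ℤ) • x ∈ H := by
      intro x hx
      have hx' := (chi_eq_zero_iff x).mp hx
      have hxe : (2 : ℤ) • x = (x 0) • h0 + (x 5) • hinf := by
        funext i
        obtain ⟨h1, h2, h3, h4⟩ := hx'
        fin_cases i
        · show (2:ℤ) * x 0 = x 0 * 2 + x 5 * 0; omega
        · show (2:ℤ) * x 1 = x 0 * 1 + x 5 * 1; omega
        · show (2:ℤ) * x 2 = x 0 * 1 + x 5 * 1; omega
        · show (2:ℤ) * x 3 = x 0 * 1 + x 5 * 1; omega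
        · show (2:ℤ) * x 4 = x 0 * 1 + x 5 * 1; omega
        · show (2:ℤ) * x 5 = x 0 * 0 + x 5 * 2; omega
      rw [hxe]
      exact AddSubgroup.add_mem _ (AddSubgroup.zsmul_mem _ hh0 _)
        (AddSubgroup.zsmul_mem _ hhinf _)
    -- Rad is finitely generated
    have hfg : AddGroup.FG ↥Rad := by
      have : Module.Finite ℤ ↥(AddSubgroup.toIntSubmodule Rad) := by
        infer_instance
      exact Module.Finite.iff_addGroup_fg.mp this
    have hfgq : AddGroup.FG (↥Rad ⧸ (H.addSubgroupOf Rad)) := by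
      exact AddGroup.fg_of_surjective (QuotientAddGroup.mk'_surjective _)
    have htor : AddMonoid.IsTorsion (↥Rad ⧸ (H.addSubgroupOf Rad)) := by
      intro y
      obtain ⟨x, rfl⟩ := QuotientAddGroup.mk'_surjective _ y
      rw [isOfFinAddOrder_iff_nsmul_eq_zero]
      refine ⟨2, by norm_num, ?_⟩
      rw [← map_nsmul]
      rw [QuotientAddGroup.mk'_apply, QuotientAddGroup.eq_zero_iff]
      show ((2 • x : ↥Rad) : Fin 6 → ℤ) ∈ H
      have : ((2 • x : ↥Rad) : Fin 6 → ℤ) = (2 : ℤ) • (x : Fin 6 → ℤ) := by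
        push_cast; simp
      rw [this]
      exact key _ x.2
    have hfin : Finite (↥Rad ⧸ (H.addSubgroupOf Rad)) :=
      AddCommGroup.finite_of_fg_torsion _ htor
    exact AddSubgroup.index_ne_zero_of_finite
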